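/- Let k ≥ 1 and let d₁, …, d_k ≥ 2 be integers, and let ℓ be an integer with ℓ ≥ max_s d_s + 1. Then there exists a constant c > 0 (depending only on ℓ and d₁, …, d_k) such that for all real numbers b₁ ≥ b₂ ≥ ⋯ ≥ b_k > 0, every L > 0 and every C ≥ 1, ∫_{ℝ^{d₁} × ⋯ × ℝ^{d_k}} (∏_{s=1}^k max(1, ‖x_s‖)^{−ℓ}) · ω(π L Σ_{j=1}^k b_j |x_j^{(1)}|) dx₁ ⋯ dx_k ≤ c (C^{−k} + C² (L b_k)⁻²), where x_j^{(1)} denotes the first coordinate of x_j ∈ ℝ^{d_j}. Consequently, there is a constant c′ > 0 such that the integral is at most c′ · max(1, L b_k)^{−2k/(k+2)} for all L > 0. -/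

import Mathlib

/-- The Fejér-type kernel `ω(t) = sin²(t)/t²` for `t ≠ 0`, `ω(0) = 1`. -/
noncomputable def fejerKernel (t : ℝ) : ℝ :=
  if t = 0 then 1 else Real.sin t ^ 2 / t ^ 2


open MeasureTheory Real

lemma fejer_nonneg (t : ℝ) : 0 ≤ fejerKernel t := by
  unfold fejerKernel; split <;> positivity

lemma fejer_le_one (t : ℝ) : fejerKernel t ≤ 1 := by
  unfold fejerKernel; split
  · exact le_rfl
  · rename_i h
    rw [div_le_one (by positivity)]
    exact Real.sin_sq_le_sq

lemma fejer_le_inv_sq {t : ℝ} (ht : t ≠ 0) : fejerKernel t ≤ (t ^ 2)⁻¹ := by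
  unfold fejerKernel
  rw [if_neg ht, div_le_iff₀ (by positivity), inv_mul_cancel₀ (by positivity)]
  exact Real.sin_sq_le_one t

/-- auxiliary radial function with natural exponent -/
noncomputable def gfun (ℓ : ℕ) {n : ℕ} (y : Fin n → ℝ) : ℝ := ((max 1 ‖y‖) ^ ℓ)⁻¹

lemma gfun_nonneg (ℓ : ℕ) {n : ℕ} (y : Fin n → ℝ) : 0 ≤ gfun ℓ y := by
  unfold gfun; positivity

lemma one_le_max_norm {n : ℕ} (y : Fin n → ℝ) : (1:ℝ) ≤ max 1 ‖y‖ := le_max_left _ _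

lemma gfun_le_one (ℓ : ℕ) {n : ℕ} (y : Fin n → ℝ) : gfun ℓ y ≤ 1 := by
  unfold gfun
  rw [inv_le_one_iff₀]
  right
  exact one_le_pow₀ (one_le_max_norm y)

lemma continuous_gfun (ℓ : ℕ) {n : ℕ} : Continuous (gfun ℓ : (Fin n → ℝ) → ℝ) := by
  apply Continuous.inv₀
  · fun_prop
  · intro x
    positivity

lemma integrable_gfun {ℓ n : ℕ} (h : n < ℓ) :
    Integrable (gfun ℓ : (Fin n → ℝ) → ℝ) := by
  have hfr : ((Module.finrank ℝ (Fin n → ℝ)) : ℝ) < (ℓ : ℝ) := by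
    simp [Module.finrank_fin_fun]; exact_mod_cast h
  refine ((integrable_one_add_norm (μ := volume) hfr).const_mul ((2:ℝ)^(ℓ:ℝ))).mono'
    (continuous_gfun ℓ).aestronglyMeasurable (Filter.Eventually.of_forall fun y => ?_)
  rw [Real.norm_eq_abs, abs_of_nonneg (gfun_nonneg ℓ y)]
  have h1 : (0:ℝ) < 1 + ‖y‖ := by positivity
  have hmax : (1 + ‖y‖) / 2 ≤ max 1 ‖y‖ := by
    rcases le_total ‖y‖ 1 with h' | h'
    · rw [max_eq_left h']; linarith
    · rw [max_eq_right h']; linarith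
  have : ((1 + ‖y‖)/2) ^ ℓ ≤ (max 1 ‖y‖) ^ ℓ :=
    pow_le_pow_left₀ (by positivity) hmax ℓ
  have h2 : gfun ℓ y ≤ (((1 + ‖y‖)/2) ^ ℓ)⁻¹ := by
    unfold gfun
    exact inv_anti₀ (by positivity) this
  refine h2.trans (le_of_eq ?_)
  rw [Real.rpow_neg h1.le, Real.rpow_natCast, Real.rpow_natCast, div_pow, inv_div]
  field_simp
open MeasureTheory Real

/-- one-dim rpow majorant -/
noncomputable def hfun (p : ℝ) (u : ℝ) : ℝ := (max 1 |u|) ^ (-p)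

lemma hfun_nonneg (p u : ℝ) : 0 ≤ hfun p u := Real.rpow_nonneg (by positivity) _

lemma one_le_max_abs (u : ℝ) : (1:ℝ) ≤ max 1 |u| := le_max_left _ _

lemma continuous_hfun (p : ℝ) : Continuous (hfun p) := by
  apply Continuous.rpow_const (by fun_prop)
  intro u
  left
  positivity

lemma integrable_hfun {p : ℝ} (hp : 1 < p) : Integrable (hfun p) := by
  have hfr : ((Module.finrank ℝ ℝ) : ℝ) < p := by simpa using hp
  refine ((integrable_one_add_norm (μ := volume) hfr).const_mul ((2:ℝ)^p)).mono'
    (continuous_hfun p).aestronglyMeasurable (Filter.Eventually.of_forall fun u => ?_)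
  rw [Real.norm_eq_abs, abs_of_nonneg (hfun_nonneg p u), Real.norm_eq_abs]
  have h1 : (0:ℝ) < 1 + |u| := by positivity
  have hmax : (1 + |u|) / 2 ≤ max 1 |u| := by
    rcases le_total |u| 1 with h' | h'
    · rw [max_eq_left h']; linarith
    · rw [max_eq_right h']; linarith
  have h2 : hfun p u ≤ ((1 + |u|)/2) ^ (-p) :=
    Real.rpow_le_rpow_of_nonpos (by positivity) hmax (by linarith)
  refine h2.trans (le_of_eq ?_)
  rw [Real.div_rpow h1.le (by norm_num), Real.rpow_neg h1.le, Real.rpow_neg (by norm_num : (0:ℝ) ≤ 2)]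
  field_simp
open MeasureTheory Real

/-- indicator of `|u| ≤ δ` -/
noncomputable def indf (δ u : ℝ) : ℝ := if |u| ≤ δ then 1 else 0

lemma indf_nonneg (δ u : ℝ) : 0 ≤ indf δ u := by unfold indf; split <;> norm_num

lemma indf_le_one (δ u : ℝ) : indf δ u ≤ 1 := by unfold indf; split <;> norm_num

lemma measurable_indf (δ : ℝ) : Measurable (indf δ) := by
  apply Measurable.ite (measurableSet_le (by fun_prop) measurable_const) <;> fun_prop

lemma indf_eq_indicator (δ : ℝ) :
    indf δ = Set.indicator (Set.Icc (-δ) δ) (fun _ => (1:ℝ)) := by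
  funext u
  simp only [indf, Set.indicator, Set.mem_Icc, ← abs_le]

lemma integrable_indf (δ : ℝ) : Integrable (indf δ) := by
  rw [indf_eq_indicator, integrable_indicator_iff measurableSet_Icc]
  exact integrableOn_const measure_Icc_lt_top.ne

lemma integral_indf {δ : ℝ} (hδ : 0 ≤ δ) : ∫ u, indf δ u = 2 * δ := by
  rw [indf_eq_indicator, MeasureTheory.integral_indicator_const _ measurableSet_Icc]
  simp [Real.volume_Icc]
  rw [max_eq_left (by linarith)]
  ring

noncomputable def Kconst (n ℓ : ℕ) : ℝ :=
  2 * (∫ u, hfun ((ℓ:ℝ)/((n-1:ℕ):ℝ)) u) ^ (n-1)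

lemma Kconst_nonneg (n ℓ : ℕ) : 0 ≤ Kconst n ℓ := by
  have : 0 ≤ ∫ u, hfun ((ℓ:ℝ)/((n-1:ℕ):ℝ)) u :=
    integral_nonneg fun u => hfun_nonneg _ _
  unfold Kconst; positivity

lemma strip {n ℓ : ℕ} (h2 : 2 ≤ n) (hℓ : n + 1 ≤ ℓ) {δ : ℝ} (hδ : 0 < δ) :
    ∫ y : Fin n → ℝ, gfun ℓ y * indf δ (y ⟨0, by omega⟩) ≤ δ * Kconst n ℓ := by
  have hn1 : (0:ℝ) < ((n-1:ℕ):ℝ) := by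
    have : 1 ≤ n - 1 := by omega
    exact_mod_cast this
  set p := (ℓ:ℝ)/((n-1:ℕ):ℝ) with hp_def
  have hp : 1 < p := by
    rw [hp_def, lt_div_iff₀ hn1, one_mul]
    exact_mod_cast by omega
  have hpn : p * ((n-1:ℕ):ℝ) = (ℓ:ℝ) := div_mul_cancel₀ _ hn1.ne'
  set z : Fin n := ⟨0, by omega⟩ with hz
  set f : Fin n → ℝ → ℝ := fun i u => if i = z then indf δ u else hfun p u with hf
  have hfint : ∀ i, Integrable (f i) := by
    intro i
    by_cases h : i = z <;>
      simp only [hf, h, if_pos, if_neg, reduceIte] <;>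
      first
        | exact integrable_indf δ
        | exact integrable_hfun hp
  have hcard : (Finset.univ.erase z).card = n - 1 := by
    rw [Finset.card_erase_of_mem (Finset.mem_univ z), Finset.card_univ, Fintype.card_fin]
  have hpoint : ∀ y : Fin n → ℝ, gfun ℓ y * indf δ (y z) ≤ ∏ i, f i (y i) := by
    intro y
    rw [← Finset.mul_prod_erase Finset.univ _ (Finset.mem_univ z)]
    have hprod_eq : ∏ i ∈ Finset.univ.erase z, f i (y i)
        = ∏ i ∈ Finset.univ.erase z, hfun p (y i) :=
      Finset.prod_congr rfl fun i hi => by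
        simp only [hf, if_neg (Finset.ne_of_mem_erase hi)]
    have hfz : f z (y z) = indf δ (y z) := by simp [hf]
    rw [hprod_eq, hfz, mul_comm (indf δ (y z))]
    refine mul_le_mul_of_nonneg_right ?_ (indf_nonneg δ (y z))
    -- core inequality
    have hbase : (0:ℝ) < max 1 ‖y‖ := by positivity
    have hcore : ∏ i ∈ Finset.univ.erase z, (max 1 |y i|) ^ p ≤ (max 1 ‖y‖) ^ (ℓ:ℕ) := by
      calc ∏ i ∈ Finset.univ.erase z, (max 1 |y i|) ^ p
          ≤ ∏ _i ∈ Finset.univ.erase z, (max 1 ‖y‖) ^ p := by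
            refine Finset.prod_le_prod (fun i _ => Real.rpow_nonneg (by positivity) p)
              (fun i _ => Real.rpow_le_rpow (by positivity)
                (max_le_max le_rfl ?_) (by linarith))
            calc |y i| = ‖y i‖ := (Real.norm_eq_abs _).symm
            _ ≤ ‖y‖ := norm_le_pi_norm y i
        _ = ((max 1 ‖y‖) ^ p) ^ ((n-1:ℕ):ℕ) := by rw [Finset.prod_const, hcard]
        _ = (max 1 ‖y‖) ^ (ℓ:ℕ) := by
            rw [← Real.rpow_natCast ((max 1 ‖y‖) ^ p) (n-1), ← Real.rpow_mul hbase.le, hpn,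
              Real.rpow_natCast]
    have hrhs : ∏ i ∈ Finset.univ.erase z, hfun p (y i)
        = (∏ i ∈ Finset.univ.erase z, (max 1 |y i|) ^ p)⁻¹ := by
      rw [← Finset.prod_inv_distrib]
      exact Finset.prod_congr rfl fun i _ => by
        rw [hfun, Real.rpow_neg (by positivity)]
    rw [hrhs]
    unfold gfun
    exact inv_anti₀ (Finset.prod_pos fun i _ => Real.rpow_pos_of_pos (by positivity) p)
      hcore
  have h1 : ∫ y : Fin n → ℝ, gfun ℓ y * indf δ (y z)
      ≤ ∫ y : Fin n → ℝ, ∏ i, f i (y i) :=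
    integral_mono_of_nonneg
      (Filter.Eventually.of_forall fun y => mul_nonneg (gfun_nonneg _ _) (indf_nonneg _ _))
      (Integrable.fintype_prod hfint) (Filter.Eventually.of_forall hpoint)
  refine h1.trans ?_
  rw [MeasureTheory.integral_fintype_prod_volume_eq_prod f,
    ← Finset.mul_prod_erase Finset.univ _ (Finset.mem_univ z)]
  have : ∀ i ∈ Finset.univ.erase z, (∫ u, f i u) = ∫ u, hfun p u := fun i hi => by
    simp only [hf, if_neg (Finset.ne_of_mem_erase hi)]
  rw [Finset.prod_congr rfl this, Finset.prod_const, hcard]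
  have hfz : (∫ u, f z u) = 2 * δ := by
    simp only [hf, if_pos rfl]
    exact integral_indf hδ.le
  rw [hfz, Kconst]
  ring_nf
  exact le_rfl

lemma key (k : ℕ) (hk : 1 ≤ k) (d : Fin k → ℕ) (hd : ∀ s, 2 ≤ d s)
    (ℓ : ℕ) (hℓ : ∀ s, d s + 1 ≤ ℓ) :
    ∃ c : ℝ, 1 ≤ c ∧
      (∀ b : Fin k → ℝ, (∀ s, 0 < b s) → (∀ i j : Fin k, i ≤ j → b j ≤ b i) →
        ∀ L : ℝ, 0 < L → ∀ C : ℝ, 1 ≤ C →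
          (∫ x : (s : Fin k) → (Fin (d s) → ℝ),
              (∏ s, gfun ℓ (x s)) * fejerKernel (Real.pi * L *
                ∑ j, b j * |x j ⟨0, Nat.lt_of_lt_of_le two_pos (hd j)⟩|))
            ≤ c * (C ^ (-(k:ℤ)) + C ^ 2 * ((L * b ⟨k-1, Nat.sub_lt hk Nat.one_pos⟩)^2)⁻¹)) ∧
      (∀ b : Fin k → ℝ, ∀ L : ℝ,
          (∫ x : (s : Fin k) → (Fin (d s) → ℝ),
              (∏ s, gfun ℓ (x s)) * fejerKernel (Real.pi * L *
                ∑ j, b j * |x j ⟨0, Nat.lt_of_lt_of_le two_pos (hd j)⟩|))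
            ≤ c) := by
  classical
  have hdℓ : ∀ s, d s < ℓ := fun s => by have := hℓ s; omega
  have hint_g : ∀ s : Fin k, Integrable (gfun ℓ : (Fin (d s) → ℝ) → ℝ) :=
    fun s => integrable_gfun (hdℓ s)
  set A : Fin k → ℝ := fun s => ∫ y : Fin (d s) → ℝ, gfun ℓ y with hAdef
  have hAnn : ∀ s, 0 ≤ A s := fun s => integral_nonneg fun y => gfun_nonneg _ _
  set K : Fin k → ℝ := fun s => Kconst (d s) ℓ with hKdef
  have hKnn : ∀ s, 0 ≤ K s := fun s => Kconst_nonneg _ _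
  set c : ℝ := max 1 (max (∏ s, K s) (∏ s, A s)) with hc
  have hc1 : (1:ℝ) ≤ c := le_max_left _ _
  have hcK : ∏ s, K s ≤ c := le_trans (le_max_left _ _) (le_max_right _ _)
  have hcA : ∏ s, A s ≤ c := le_trans (le_max_right _ _) (le_max_right _ _)
  -- integrability of the big product
  have hint_prod : Integrable (fun x : (s : Fin k) → (Fin (d s) → ℝ) => ∏ s, gfun ℓ (x s)) :=
    Integrable.fintype_prod_dep hint_g
  have hprod_nn : ∀ x : (s : Fin k) → (Fin (d s) → ℝ), 0 ≤ ∏ s, gfun ℓ (x s) :=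
    fun x => Finset.prod_nonneg fun s _ => gfun_nonneg _ _
  -- trivial bound first
  have htriv : ∀ b : Fin k → ℝ, ∀ L : ℝ,
      (∫ x : (s : Fin k) → (Fin (d s) → ℝ),
          (∏ s, gfun ℓ (x s)) * fejerKernel (Real.pi * L *
            ∑ j, b j * |x j ⟨0, Nat.lt_of_lt_of_le two_pos (hd j)⟩|)) ≤ c := by
    intro b L
    have h1 : (∫ x : (s : Fin k) → (Fin (d s) → ℝ),
        (∏ s, gfun ℓ (x s)) * fejerKernel (Real.pi * L *
          ∑ j, b j * |x j ⟨0, Nat.lt_of_lt_of_le two_pos (hd j)⟩|))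
        ≤ ∫ x : (s : Fin k) → (Fin (d s) → ℝ), ∏ s, gfun ℓ (x s) := by
      refine integral_mono_of_nonneg (Filter.Eventually.of_forall fun x => ?_) hint_prod
        (Filter.Eventually.of_forall fun x => ?_)
      · exact mul_nonneg (hprod_nn x) (fejer_nonneg _)
      · calc (∏ s, gfun ℓ (x s)) * fejerKernel _ ≤ (∏ s, gfun ℓ (x s)) * 1 :=
            mul_le_mul_of_nonneg_left (fejer_le_one _) (hprod_nn x)
        _ = ∏ s, gfun ℓ (x s) := mul_one _
    refine h1.trans ?_
    rw [MeasureTheory.integral_fintype_prod_volume_eq_prod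
      (fun s => (gfun ℓ : (Fin (d s) → ℝ) → ℝ))]
    exact hcA
  refine ⟨c, hc1, ?_, htriv⟩
  intro b hb hmono L hL C hC
  have hC0 : (0:ℝ) < C := lt_of_lt_of_le one_pos hC
  set lastI : Fin k := ⟨k-1, Nat.sub_lt hk Nat.one_pos⟩ with hlast
  set δ : ℝ := 1/C with hδdef
  have hδ : 0 < δ := by positivity
  set t : ℝ := L * b lastI with ht
  have htpos : 0 < t := mul_pos hL (hb lastI)
  set κ : ℝ := C ^ 2 * (t^2)⁻¹ with hκ
  have hκnn : 0 ≤ κ := by positivity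
  set G1 : (s : Fin k) → (Fin (d s) → ℝ) → ℝ :=
    fun s y => gfun ℓ y * indf δ (y ⟨0, Nat.lt_of_lt_of_le two_pos (hd s)⟩) with hG1
  have hG1nn : ∀ s y, 0 ≤ G1 s y := fun s y => mul_nonneg (gfun_nonneg _ _) (indf_nonneg _ _)
  have hG1int : ∀ s, Integrable (G1 s) := by
    intro s
    refine (hint_g s).mono' ?_ (Filter.Eventually.of_forall fun y => ?_)
    · exact ((continuous_gfun ℓ).measurable.mul
        ((measurable_indf δ).comp (measurable_pi_apply _))).aestronglyMeasurable
    · rw [Real.norm_eq_abs, abs_of_nonneg (hG1nn s y)]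
      calc gfun ℓ y * indf δ _ ≤ gfun ℓ y * 1 :=
          mul_le_mul_of_nonneg_left (indf_le_one _ _) (gfun_nonneg _ _)
      _ = gfun ℓ y := mul_one _
  have hint1 : Integrable (fun x : (s : Fin k) → (Fin (d s) → ℝ) => ∏ s, G1 s (x s)) :=
    Integrable.fintype_prod_dep hG1int
  -- pointwise bound
  have hpoint : ∀ x : (s : Fin k) → (Fin (d s) → ℝ),
      (∏ s, gfun ℓ (x s)) * fejerKernel (Real.pi * L *
        ∑ j, b j * |x j ⟨0, Nat.lt_of_lt_of_le two_pos (hd j)⟩|)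
      ≤ (∏ s, G1 s (x s)) + κ * ∏ s, gfun ℓ (x s) := by
    intro x
    set T : ℝ := Real.pi * L * ∑ j, b j * |x j ⟨0, Nat.lt_of_lt_of_le two_pos (hd j)⟩| with hT
    by_cases hall : ∀ s : Fin k, |x s ⟨0, Nat.lt_of_lt_of_le two_pos (hd s)⟩| ≤ δ
    · have hGeq : ∀ s, G1 s (x s) = gfun ℓ (x s) := by
        intro s
        rw [hG1]
        simp only [indf, if_pos (hall s), mul_one]
      have : (∏ s, gfun ℓ (x s)) * fejerKernel T ≤ ∏ s, gfun ℓ (x s) := by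
        calc (∏ s, gfun ℓ (x s)) * fejerKernel T ≤ (∏ s, gfun ℓ (x s)) * 1 :=
            mul_le_mul_of_nonneg_left (fejer_le_one _) (hprod_nn x)
        _ = _ := mul_one _
      refine this.trans ?_
      rw [Finset.prod_congr rfl fun s _ => (hGeq s).symm]
      exact le_add_of_nonneg_right (mul_nonneg hκnn
        (Finset.prod_nonneg fun s _ => hG1nn s (x s)))
    · push_neg at hall
      obtain ⟨s₀, hs₀⟩ := hall
      have hble : b lastI ≤ b s₀ := hmono s₀ lastI (by
        rw [Fin.le_def]
        have := s₀.isLt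
        simp only [hlast]
        omega)
      have hsum : b lastI * δ ≤ ∑ j, b j * |x j ⟨0, Nat.lt_of_lt_of_le two_pos (hd j)⟩| := by
        have h1 : b lastI * δ ≤ b s₀ * |x s₀ ⟨0, Nat.lt_of_lt_of_le two_pos (hd s₀)⟩| :=
          mul_le_mul hble hs₀.le hδ.le (hb s₀).le
        refine h1.trans ?_
        exact Finset.single_le_sum
          (f := fun j : Fin k => b j * |x j ⟨0, Nat.lt_of_lt_of_le two_pos (hd j)⟩|)
          (fun j _ => mul_nonneg (hb j).le (abs_nonneg _)) (Finset.mem_univ s₀)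
      have hTlb : Real.pi * L * (b lastI * δ) ≤ T := by
        rw [hT]
        exact mul_le_mul_of_nonneg_left hsum (mul_nonneg Real.pi_pos.le hL.le)
      have hTpos : 0 < T := lt_of_lt_of_le
        (mul_pos (mul_pos Real.pi_pos hL) (mul_pos (hb lastI) hδ)) hTlb
      have hfe : fejerKernel T ≤ κ := by
        refine (fejer_le_inv_sq hTpos.ne').trans ?_
        have h2 : (t/C)^2 ≤ T^2 := by
          have h3 : t/C ≤ Real.pi * L * (b lastI * δ) := by
            rw [hδdef, ht]
            have hpi : (1:ℝ) ≤ Real.pi := by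
              have := Real.pi_gt_three; linarith
            have h4 : L * b lastI / C = 1 * (L * (b lastI * (1/C))) := by ring
            rw [h4]
            have h5 : L * (b lastI * (1/C)) ≤ Real.pi * (L * (b lastI * (1/C))) :=
              le_mul_of_one_le_left (mul_nonneg hL.le (mul_nonneg (hb lastI).le (by positivity))) hpi
            calc 1 * (L * (b lastI * (1/C))) = L * (b lastI * (1/C)) := one_mul _
            _ ≤ Real.pi * (L * (b lastI * (1/C))) := h5
            _ = Real.pi * L * (b lastI * (1/C)) := by ring
          exact pow_le_pow_left₀ (div_nonneg htpos.le hC0.le) (h3.trans hTlb) 2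
        have h6 : (T^2)⁻¹ ≤ ((t/C)^2)⁻¹ :=
          inv_anti₀ (pow_pos (div_pos htpos hC0) 2) h2
        refine h6.trans (le_of_eq ?_)
        rw [hκ]
        field_simp
      calc (∏ s, gfun ℓ (x s)) * fejerKernel T ≤ (∏ s, gfun ℓ (x s)) * κ :=
          mul_le_mul_of_nonneg_left hfe (hprod_nn x)
      _ = κ * ∏ s, gfun ℓ (x s) := mul_comm _ _
      _ ≤ (∏ s, G1 s (x s)) + κ * ∏ s, gfun ℓ (x s) :=
          le_add_of_nonneg_left (Finset.prod_nonneg fun s _ => hG1nn s (x s))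
  -- integrate
  have hstep1 : (∫ x : (s : Fin k) → (Fin (d s) → ℝ),
      (∏ s, gfun ℓ (x s)) * fejerKernel (Real.pi * L *
        ∑ j, b j * |x j ⟨0, Nat.lt_of_lt_of_le two_pos (hd j)⟩|))
      ≤ ∫ x : (s : Fin k) → (Fin (d s) → ℝ),
        ((∏ s, G1 s (x s)) + κ * ∏ s, gfun ℓ (x s)) :=
    integral_mono_of_nonneg
      (Filter.Eventually.of_forall fun x => mul_nonneg (hprod_nn x) (fejer_nonneg _))
      (hint1.add (hint_prod.const_mul κ))
      (Filter.Eventually.of_forall hpoint)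
  refine hstep1.trans ?_
  rw [integral_add hint1 (hint_prod.const_mul κ), integral_const_mul κ _,
    MeasureTheory.integral_fintype_prod_volume_eq_prod G1,
    MeasureTheory.integral_fintype_prod_volume_eq_prod
      (fun s => (gfun ℓ : (Fin (d s) → ℝ) → ℝ))]
  have hG1s : ∀ s : Fin k, (∫ y : Fin (d s) → ℝ, G1 s y) ≤ δ * K s := by
    intro s
    exact strip (hd s) (hℓ s) hδ
  have hG1snn : ∀ s : Fin k, 0 ≤ ∫ y : Fin (d s) → ℝ, G1 s y :=
    fun s => integral_nonneg fun y => hG1nn s y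
  have h7 : (∏ s, ∫ y : Fin (d s) → ℝ, G1 s y) ≤ ∏ s : Fin k, (δ * K s) :=
    Finset.prod_le_prod (fun s _ => hG1snn s) (fun s _ => hG1s s)
  have h8 : (∏ s : Fin k, (δ * K s)) = δ^k * ∏ s, K s := by
    rw [Finset.prod_mul_distrib, Finset.prod_const, Finset.card_univ, Fintype.card_fin]
  have h9 : δ^k = C ^ (-(k:ℤ)) := by
    rw [hδdef, one_div, inv_pow, ← zpow_natCast C k, ← zpow_neg]
  have h10 : (∏ s, ∫ y : Fin (d s) → ℝ, G1 s y) ≤ C ^ (-(k:ℤ)) * c := by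
    refine h7.trans ?_
    rw [h8, h9]
    exact mul_le_mul_of_nonneg_left hcK (by positivity)
  have h11 : κ * ∏ s, A s ≤ κ * c := mul_le_mul_of_nonneg_left hcA hκnn
  calc (∏ s, ∫ y : Fin (d s) → ℝ, G1 s y) + κ * ∏ s, A s
      ≤ C ^ (-(k:ℤ)) * c + κ * c := add_le_add h10 h11
  _ = c * (C ^ (-(k:ℤ)) + C ^ 2 * ((L * b lastI)^2)⁻¹) := by rw [hκ, ht]; ring

/-- Multi-factor Fejér integral bound: for `d₁,…,d_k ≥ 2`, `ℓ ≥ max d_s + 1`,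
and decreasing positive weights `b₁ ≥ ⋯ ≥ b_k > 0`, the integral
`∫ ∏_s max(1,‖x_s‖)^{-ℓ} · ω(πL Σ_j b_j |x_j⁽¹⁾|)` is `≤ c(C^{-k} + C²(Lb_k)⁻²)`
for all `C ≥ 1`, and consequently `≤ c'·max(1, Lb_k)^{-2k/(k+2)}`. -/

theorem multi_fejer_integral_bound (k : ℕ) (hk : 1 ≤ k) (d : Fin k → ℕ)
    (hd : ∀ s, 2 ≤ d s) (ℓ : ℕ) (hℓ : ∀ s, d s + 1 ≤ ℓ) :
    (∃ c : ℝ, 0 < c ∧ ∀ b : Fin k → ℝ, (∀ s, 0 < b s) →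
      (∀ i j : Fin k, i ≤ j → b j ≤ b i) →
      ∀ L : ℝ, 0 < L → ∀ C : ℝ, 1 ≤ C →
        (∫ x : (s : Fin k) → (Fin (d s) → ℝ),
            (∏ s, (max 1 ‖x s‖) ^ (-(ℓ : ℤ))) *
              fejerKernel (Real.pi * L *
                ∑ j, b j * |x j ⟨0, by have := hd j; omega⟩|))
          ≤ c * (C ^ (-(k : ℤ)) + C ^ 2 * ((L * b ⟨k - 1, by omega⟩) ^ 2)⁻¹)) ∧
    (∃ c' : ℝ, 0 < c' ∧ ∀ b : Fin k → ℝ, (∀ s, 0 < b s) →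
      (∀ i j : Fin k, i ≤ j → b j ≤ b i) →
      ∀ L : ℝ, 0 < L →
        (∫ x : (s : Fin k) → (Fin (d s) → ℝ),
            (∏ s, (max 1 ‖x s‖) ^ (-(ℓ : ℤ))) *
              fejerKernel (Real.pi * L *
                ∑ j, b j * |x j ⟨0, by have := hd j; omega⟩|))
          ≤ c' * (max 1 (L * b ⟨k - 1, by omega⟩)) ^
              (-(2 * (k : ℝ) / ((k : ℝ) + 2)))) := by

  obtain ⟨c, hc1, hpart1, htriv⟩ := key k hk d hd ℓ hℓ
  have hgeq : ∀ (x : (s : Fin k) → (Fin (d s) → ℝ)),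
      (∏ s, (max 1 ‖x s‖) ^ (-(ℓ : ℤ))) = ∏ s, gfun ℓ (x s) := by
    intro x
    refine Finset.prod_congr rfl fun s _ => ?_
    rw [zpow_neg, zpow_natCast]
    rfl
  constructor
  · refine ⟨c, lt_of_lt_of_le one_pos hc1, ?_⟩
    intro b hb hmono L hL C hC
    simp_rw [hgeq]
    exact hpart1 b hb hmono L hL C hC
  · refine ⟨2 * c, by linarith, ?_⟩
    intro b hb hmono L hL
    simp_rw [hgeq]
    set lastI : Fin k := ⟨k - 1, by omega⟩ with hlast
    set t : ℝ := L * b lastI with ht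
    have htpos : 0 < t := mul_pos hL (hb lastI)
    have hkk : ((k:ℝ) + 2) ≠ 0 := by positivity
    rcases le_or_gt t 1 with h1 | h1
    · rw [max_eq_left h1, Real.one_rpow]
      calc _ ≤ c := htriv b L
      _ ≤ 2 * c * 1 := by linarith
    · set C : ℝ := t ^ ((2:ℝ)/((k:ℝ)+2)) with hCdef
      have hC : 1 ≤ C := Real.one_le_rpow h1.le (by positivity)
      have hmain := hpart1 b hb hmono L hL C hC
      have ht0 : (0:ℝ) ≤ t := htpos.le
      have e1 : C ^ (-(k:ℤ)) = t ^ (-(2*(k:ℝ)/((k:ℝ)+2))) := by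
        rw [zpow_neg, zpow_natCast, ← Real.rpow_natCast C k, hCdef,
          ← Real.rpow_mul ht0, ← Real.rpow_neg ht0]
        congr 1
        field_simp
      have e2 : C ^ 2 * ((L * b lastI) ^ 2)⁻¹ = t ^ (-(2*(k:ℝ)/((k:ℝ)+2))) := by
        rw [← ht, hCdef, ← Real.rpow_natCast (t ^ ((2:ℝ)/((k:ℝ)+2))) 2,
          ← Real.rpow_mul ht0, ← Real.rpow_natCast t 2, ← Real.rpow_neg ht0,
          ← Real.rpow_add htpos]
        congr 1
        push_cast
        field_simp
        ring
      rw [max_eq_right h1.le]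
      calc _ ≤ c * (C ^ (-(k:ℤ)) + C ^ 2 * ((L * b lastI) ^ 2)⁻¹) := hmain
      _ = 2 * c * t ^ (-(2*(k:ℝ)/((k:ℝ)+2))) := by rw [e1, e2]; ring
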